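/- Let H be a symmetric operator on a finite-dimensional real inner product space whose smallest eigenvalue E₀ is simple with eigenvector ψ₀, and second smallest eigenvalue E₁ > E₀. Let ψ be a unit vector with E(ψ) = ⟨ψ, Hψ⟩ < (E₀ + E₁)/2. Then for every nonzero v in the tangent space T_ψ𝕊 (i.e., ⟨ψ, v⟩ = 0), the bilinear form a(v, v) = ⟨Hv, v⟩ − E(ψ)⟨v, v⟩ is strictly positive; hence a is an inner product on T_ψ𝕊. -/

import Mathlib

open scoped RealInnerProductSpace

lemma key_arith (E₀ E₁ Eψ a b nv X : ℝ) (hgap : E₀ < E₁) (hmid : Eψ < (E₀ + E₁) / 2)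
    (h1 : E₁ * (1 - b) ≤ Eψ - E₀ * b) (h2 : E₁ * (nv - a) ≤ X - E₀ * a)
    (hcs : a * b ≤ (1 - b) * (nv - a)) (hvpos : 0 < nv) (ha : 0 ≤ a)
    (hwnn : 0 ≤ nv - a) : 0 < X - Eψ * nv := by
  have hb : 1 / 2 < b := by nlinarith
  rcases eq_or_lt_of_le hwnn with ht | ht
  · exfalso; nlinarith [mul_pos hvpos (show (0:ℝ) < b by linarith)]
  · rcases le_or_gt Eψ E₀ with hcase | hcase
    · nlinarith [mul_pos ht (show (0:ℝ) < E₁ - Eψ by linarith),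
        mul_nonneg ha (show (0:ℝ) ≤ E₀ - Eψ by linarith)]
    · have A : (Eψ - E₀) * (a * b) ≤ (Eψ - E₀) * ((1 - b) * (nv - a)) :=
        mul_le_mul_of_nonneg_left hcs (by linarith)
      have B : 0 ≤ (nv - a) * ((E₁ - E₀) * b - (E₁ - Eψ)) :=
        mul_nonneg (le_of_lt ht) (by nlinarith)
      have C : 0 < (nv - a) * (E₀ + E₁ - 2 * Eψ) := mul_pos ht (by linarith)
      have D : E₁ * (nv - a) * b ≤ (X - E₀ * a) * b :=
        mul_le_mul_of_nonneg_right h2 (by linarith)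
      nlinarith [A, B, C, D]

/-- If the unit vector `ψ` has energy `E(ψ) < (E₀+E₁)/2`, then the bilinear form
`a(v, w) = ⟪Hv, w⟫ − E(ψ)⟪v, w⟫` is positive definite on the tangent space
`T_ψ𝕊 = {v : ⟪ψ, v⟫ = 0}`; hence it is an inner product there. -/
theorem hessian_form_positive_on_tangent
    {F : Type*} [NormedAddCommGroup F] [InnerProductSpace ℝ F] [FiniteDimensional ℝ F]
    (H : F →L[ℝ] F) (hH : ∀ x y : F, ⟪H x, y⟫ = ⟪x, H y⟫)
    (E₀ E₁ : ℝ) (hgap : E₀ < E₁)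
    (ψ₀ : F) (hψ₀ : ‖ψ₀‖ = 1) (heig : H ψ₀ = E₀ • ψ₀)
    (hspec : ∀ w : F, ⟪ψ₀, w⟫ = 0 → E₁ * ‖w‖ ^ 2 ≤ ⟪w, H w⟫)
    (ψ : F) (hψ : ‖ψ‖ = 1)
    (Eψ : ℝ) (hEψ : Eψ = ⟪ψ, H ψ⟫) (hmid : Eψ < (E₀ + E₁) / 2) :
    ∀ v : F, v ≠ 0 → ⟪ψ, v⟫ = 0 → 0 < ⟪H v, v⟫ - Eψ * ‖v‖ ^ 2 := by
  intro v hv hperp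
  set β := ⟪ψ₀, ψ⟫ with hβ
  set α := ⟪ψ₀, v⟫ with hα
  set u := ψ - β • ψ₀ with hu
  set w := v - α • ψ₀ with hw
  have hψ₀n : ⟪ψ₀, ψ₀⟫ = 1 := by
    rw [real_inner_self_eq_norm_sq, hψ₀]; norm_num
  have hcψ : ⟪ψ, ψ₀⟫ = β := (real_inner_comm ψ ψ₀).symm
  have hcv : ⟪v, ψ₀⟫ = α := (real_inner_comm v ψ₀).symm
  have huperp : ⟪ψ₀, u⟫ = 0 := by
    simp [hu, inner_sub_right, real_inner_smul_right, hψ₀n, hψ₀, hβ]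
  have hwperp : ⟪ψ₀, w⟫ = 0 := by
    simp [hw, inner_sub_right, real_inner_smul_right, hψ₀n, hψ₀, hα]
  -- norms
  have hun : ‖u‖ ^ 2 = 1 - β ^ 2 := by
    have h0 := real_inner_self_eq_norm_sq u
    have h1 : ⟪u, u⟫ = 1 - β ^ 2 := by
      simp only [hu, inner_sub_left, inner_sub_right, real_inner_smul_left,
        real_inner_smul_right, hψ₀n, hcψ]
      rw [real_inner_self_eq_norm_sq, hψ]; ring
    rw [← h0, h1]
  have hwn : ‖w‖ ^ 2 = ‖v‖ ^ 2 - α ^ 2 := by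
    have h0 := real_inner_self_eq_norm_sq w
    have h1 : ⟪w, w⟫ = ‖v‖ ^ 2 - α ^ 2 := by
      simp only [hw, inner_sub_left, inner_sub_right, real_inner_smul_left,
        real_inner_smul_right, hψ₀n, hcv]
      rw [real_inner_self_eq_norm_sq]; ring
    rw [← h0, h1]
  -- H on u and w
  have hHψ₀v : ∀ x : F, ⟪ψ₀, H x⟫ = E₀ * ⟪ψ₀, x⟫ := by
    intro x
    rw [← hH, heig, real_inner_smul_left]
  have huHu : ⟪u, H u⟫ = Eψ - E₀ * β ^ 2 := by
    have hHu : H u = H ψ - β • (E₀ • ψ₀) := by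
      simp [hu, map_sub, map_smul, heig]
    have h2 : ⟪ψ₀, H ψ⟫ = E₀ * β := by rw [hHψ₀v]
    rw [hHu]
    simp only [hu, inner_sub_left, inner_sub_right, real_inner_smul_left,
      real_inner_smul_right, hψ₀n, hcψ, h2, hEψ]
    ring
  have hwHw : ⟪w, H w⟫ = ⟪H v, v⟫ - E₀ * α ^ 2 := by
    have hHw : H w = H v - α • (E₀ • ψ₀) := by
      simp [hw, map_sub, map_smul, heig]
    have h2 : ⟪ψ₀, H v⟫ = E₀ * α := by rw [hHψ₀v]
    have h3 : ⟪v, H v⟫ = ⟪H v, v⟫ := (real_inner_comm v (H v)).symm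
    rw [hHw]
    simp only [hw, inner_sub_left, inner_sub_right, real_inner_smul_left,
      real_inner_smul_right, hψ₀n, hcv, h2, h3]
    ring
  have h1 : E₁ * (1 - β ^ 2) ≤ Eψ - E₀ * β ^ 2 := by
    have := hspec u huperp; rw [hun, huHu] at this; exact this
  have h2 : E₁ * (‖v‖ ^ 2 - α ^ 2) ≤ ⟪H v, v⟫ - E₀ * α ^ 2 := by
    have := hspec w hwperp; rw [hwn, hwHw] at this; exact this
  -- orthogonality gives ⟨u,w⟩ = -αβ
  have huw : ⟪u, w⟫ = -(α * β) := by
    simp only [hu, hw, inner_sub_left, inner_sub_right, real_inner_smul_left,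
      real_inner_smul_right, hψ₀n, hcψ, hcv, hperp]
    ring
  have hcs : α ^ 2 * β ^ 2 ≤ (1 - β ^ 2) * (‖v‖ ^ 2 - α ^ 2) := by
    have h4 := real_inner_mul_inner_self_le u w
    rw [huw, real_inner_self_eq_norm_sq, real_inner_self_eq_norm_sq, hun, hwn] at h4
    calc α ^ 2 * β ^ 2 = -(α * β) * -(α * β) := by ring
      _ ≤ _ := h4
  have hvpos : 0 < ‖v‖ ^ 2 := by
    have h5 : 0 < ‖v‖ := norm_pos_iff.mpr hv
    positivity
  have hwnn : 0 ≤ ‖v‖ ^ 2 - α ^ 2 := by rw [← hwn]; positivity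
  exact key_arith E₀ E₁ Eψ (α ^ 2) (β ^ 2) (‖v‖ ^ 2) ⟪H v, v⟫ hgap hmid h1 h2
    hcs hvpos (sq_nonneg α) hwnn
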